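/- arXiv:2105.02073 — 2 statements merged into one kernel-verified Lean document; each statement's English description precedes it below -/
import Mathlib

section
/- Let X and Y be Polish topological vector spaces and let c be a cost function on X × Y of the form c(x₁,y₁,x₂,y₂) = h(x₁ − x₂, y₁ − y₂) for some h : X × Y → [0,∞]. Let γ be a probability measure on X × Y and κ = κ_X ⊗ κ_Y a product of probability measures κ_X on X and κ_Y on Y. Then τ_c(γ * κ) ≤ τ_c(γ). If additionally c = d^p for a pseudo-metric d on X × Y with p ≥ 1 and τ_c(γ) < ∞, then τ_c(γ)^{1/p} − τ_c(γ * κ)^{1/p} ≤ 2 (∫ h dκ)^{1/p}. -/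
open MeasureTheory ENNReal Filter Topology

/-- The optimal transport cost between two measures `μ` and `ν` on a space `Z`
with base cost `c`. -/
noncomputable def otCost {Z : Type*} [MeasurableSpace Z]
    (c : Z → Z → ℝ≥0∞) (μ ν : Measure Z) : ℝ≥0∞ :=
  ⨅ (π : Measure (Z × Z)) (_ : π.map Prod.fst = μ ∧ π.map Prod.snd = ν),
    ∫⁻ p, c p.1 p.2 ∂π

/-- The transport dependency of a measure `γ` on `X × Y`. -/
noncomputable def tdep {X Y : Type*} [MeasurableSpace X] [MeasurableSpace Y]
    (c : X × Y → X × Y → ℝ≥0∞) (γ : Measure (X × Y)) : ℝ≥0∞ :=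
  otCost c γ ((γ.map Prod.fst).prod (γ.map Prod.snd))

/-- Convolution of two measures on a space with addition. -/
noncomputable def mconv {Z : Type*} [MeasurableSpace Z] [Add Z]
    (μ κ : Measure Z) : Measure Z :=
  (μ.prod κ).map fun q => q.1 + q.2

section Aux

open ProbabilityTheory Function

variable {Z : Type*} [MeasurableSpace Z]

lemma isProb_of_map_fst {μ : Measure Z} [IsProbabilityMeasure μ]
    {π : Measure (Z × Z)} (hm : π.map Prod.fst = μ) : IsProbabilityMeasure π := by
  constructor
  have h := measure_univ (μ := μ)
  rw [← hm, Measure.map_apply measurable_fst MeasurableSet.univ] at h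
  simpa using h

lemma otCost_le_coupling {c : Z → Z → ℝ≥0∞} {μ ν : Measure Z} (π : Measure (Z × Z))
    (h1 : π.map Prod.fst = μ) (h2 : π.map Prod.snd = ν) :
    otCost c μ ν ≤ ∫⁻ p, c p.1 p.2 ∂π :=
  iInf₂_le π ⟨h1, h2⟩

lemma otCost_symm_le (c : Z → Z → ℝ≥0∞) (hc : Measurable (Function.uncurry c))
    (hsymm : ∀ a b, c a b = c b a) (μ ν : Measure Z) :
    otCost c ν μ ≤ otCost c μ ν := by
  refine le_iInf₂ fun π hπ => ?_
  have h1 : (π.map Prod.swap).map Prod.fst = ν := by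
    rw [Measure.map_map measurable_fst measurable_swap]
    exact hπ.2
  have h2 : (π.map Prod.swap).map Prod.snd = μ := by
    rw [Measure.map_map measurable_snd measurable_swap]
    exact hπ.1
  refine (otCost_le_coupling _ h1 h2).trans ?_
  rw [lintegral_map (show Measurable fun p : Z × Z => c p.1 p.2 from hc) measurable_swap]
  exact le_of_eq (lintegral_congr fun q => hsymm q.2 q.1)

lemma otCost_symm (c : Z → Z → ℝ≥0∞) (hc : Measurable (Function.uncurry c))
    (hsymm : ∀ a b, c a b = c b a) (μ ν : Measure Z) :
    otCost c μ ν = otCost c ν μ :=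
  le_antisymm (otCost_symm_le c hc hsymm ν μ) (otCost_symm_le c hc hsymm μ ν)

/-- Gluing of two couplings; triangle-type estimate. -/
lemma otCost_glue [StandardBorelSpace Z] [Nonempty Z]
    (c : Z → Z → ℝ≥0∞) (hc : Measurable (Function.uncurry c))
    (d : Z → Z → ℝ≥0∞) {p : ℝ} (hp : 1 ≤ p)
    (hcd : ∀ a b, c a b = d a b ^ p)
    (htri : ∀ a b e, d a e ≤ d a b + d b e)
    (μ ρ ν : Measure Z) [IsProbabilityMeasure ρ]
    (π₁ π₂ : Measure (Z × Z)) [IsProbabilityMeasure π₁] [IsFiniteMeasure π₂]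
    (h11 : π₁.map Prod.fst = μ) (h12 : π₁.map Prod.snd = ρ)
    (h21 : π₂.map Prod.fst = ρ) (h22 : π₂.map Prod.snd = ν) :
    otCost c μ ν ^ (1 / p) ≤
      (∫⁻ q, c q.1 q.2 ∂π₁) ^ (1 / p) + (∫⁻ q, c q.1 q.2 ∂π₂) ^ (1 / p) := by
  have hp0 : (0 : ℝ) < p := lt_of_lt_of_le one_pos hp
  have hcZ : Measurable fun q : Z × Z => c q.1 q.2 := hc
  have hd : Measurable (Function.uncurry d) := by
    have hud : Function.uncurry d = fun q => Function.uncurry c q ^ (1 / p) := by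
      funext q
      show d q.1 q.2 = c q.1 q.2 ^ (1 / p)
      rw [hcd, ← ENNReal.rpow_mul, mul_one_div, div_self hp0.ne', ENNReal.rpow_one]
    rw [hud]
    exact hc.pow_const _
  set K := π₂.condKernel with hKdef
  have hK : ρ ⊗ₘ K = π₂ := by
    have h := π₂.disintegrate π₂.condKernel
    rwa [show π₂.fst = π₂.map Prod.fst from rfl, h21] at h
  set Kc := K.comap Prod.snd (measurable_snd : Measurable (Prod.snd : Z × Z → Z)) with hKc
  set η : Measure ((Z × Z) × Z) := π₁ ⊗ₘ Kc with hη
  -- second-and-third marginal of η is π₂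
  have key : ∀ f : Z × Z → ℝ≥0∞, Measurable f →
      ∫⁻ q, f (q.1.2, q.2) ∂η = ∫⁻ z, f z ∂π₂ := by
    intro f hf
    rw [hη, Measure.lintegral_compProd (show Measurable fun q : (Z × Z) × Z => f (q.1.2, q.2) from hf.comp (measurable_fst.snd.prodMk measurable_snd))]
    have hF : Measurable fun z₂ => ∫⁻ w, f (z₂, w) ∂K z₂ :=
      Measurable.lintegral_kernel_prod_right' (f := fun q => f q) hf
    calc ∫⁻ z, ∫⁻ w, f (z.2, w) ∂Kc z ∂π₁
        = ∫⁻ z, (fun z₂ => ∫⁻ w, f (z₂, w) ∂K z₂) z.2 ∂π₁ := by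
          refine lintegral_congr fun z => ?_
          rw [hKc, Kernel.comap_apply]
      _ = ∫⁻ z₂, ∫⁻ w, f (z₂, w) ∂K z₂ ∂ρ := by
          rw [← h12, lintegral_map hF measurable_snd]
      _ = ∫⁻ z, f z ∂(ρ ⊗ₘ K) := (Measure.lintegral_compProd hf).symm
      _ = _ := by rw [hK]
  have key1 : ∀ f : Z × Z → ℝ≥0∞, Measurable f →
      ∫⁻ q, f q.1 ∂η = ∫⁻ z, f z ∂π₁ := by
    intro f hf
    rw [hη, Measure.lintegral_compProd (show Measurable fun q : (Z × Z) × Z => f q.1 from hf.comp measurable_fst)]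
    have hmk : ∀ z : Z × Z, ∫⁻ _, f z ∂Kc z = f z := fun z => by
      rw [lintegral_const, hKc, Kernel.comap_apply, measure_univ, mul_one]
    exact lintegral_congr fun z => hmk z
  set g : (Z × Z) × Z → Z × Z := fun q => (q.1.1, q.2) with hg
  have hgm : Measurable g := measurable_fst.fst.prodMk measurable_snd
  have hηfst : η.map Prod.fst = π₁ := Measure.fst_compProd π₁ Kc
  have hfst : (η.map g).map Prod.fst = μ := by
    rw [Measure.map_map measurable_fst hgm]
    have he : (Prod.fst ∘ g) = (Prod.fst ∘ (Prod.fst : (Z × Z) × Z → Z × Z)) := rfl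
    rw [he, ← Measure.map_map measurable_fst measurable_fst, hηfst, h11]
  have hsnd : (η.map g).map Prod.snd = ν := by
    rw [Measure.map_map measurable_snd hgm, ← h22]
    ext s hs
    rw [Measure.map_apply (measurable_snd.comp hgm) hs, Measure.map_apply measurable_snd hs]
    have hA : MeasurableSet (Prod.snd ⁻¹' s : Set (Z × Z)) := measurable_snd hs
    have h := key _ ((measurable_one (α := ℝ≥0∞)).indicator hA)
    rw [lintegral_indicator_one hA] at h
    have he : (fun q : (Z × Z) × Z =>
        Set.indicator (Prod.snd ⁻¹' s) (1 : Z × Z → ℝ≥0∞) (q.1.2, q.2))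
        = Set.indicator ((Prod.snd ∘ g) ⁻¹' s) 1 := by
      funext q
      rfl
    rw [he, lintegral_indicator_one ((measurable_snd.comp hgm) hs)] at h
    exact h
  -- cost estimate
  have step1 : otCost c μ ν ≤ ∫⁻ q, c q.1.1 q.2 ∂η := by
    refine (otCost_le_coupling (η.map g) hfst hsnd).trans_eq ?_
    rw [lintegral_map hcZ hgm]
  have step2 : ∫⁻ q, c q.1.1 q.2 ∂η ≤
      ∫⁻ q, ((fun q : (Z × Z) × Z => d q.1.1 q.1.2) + fun q : (Z × Z) × Z => d q.1.2 q.2) q ^ p ∂η := by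
    refine lintegral_mono fun q => ?_
    rw [hcd]
    exact ENNReal.rpow_le_rpow (htri _ _ _) hp0.le
  have hmf : Measurable fun q : (Z × Z) × Z => d q.1.1 q.1.2 :=
    hd.comp (measurable_fst.fst.prodMk measurable_fst.snd)
  have hmg : Measurable fun q : (Z × Z) × Z => d q.1.2 q.2 :=
    hd.comp (measurable_fst.snd.prodMk measurable_snd)
  have step3 := ENNReal.lintegral_Lp_add_le (μ := η) hmf.aemeasurable hmg.aemeasurable hp
  have e1 : ∫⁻ q, d q.1.1 q.1.2 ^ p ∂η = ∫⁻ q, c q.1 q.2 ∂π₁ := by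
    rw [← key1 _ hcZ]
    exact lintegral_congr fun q => (hcd _ _).symm
  have e2 : ∫⁻ q, d q.1.2 q.2 ^ p ∂η = ∫⁻ q, c q.1 q.2 ∂π₂ := by
    rw [← key _ hcZ]
    exact lintegral_congr fun q => (hcd _ _).symm
  calc otCost c μ ν ^ (1 / p)
      ≤ (∫⁻ q, ((fun q : (Z × Z) × Z => d q.1.1 q.1.2) + fun q : (Z × Z) × Z => d q.1.2 q.2) q ^ p ∂η) ^ (1 / p) :=
        ENNReal.rpow_le_rpow (step1.trans step2) (by positivity)
    _ ≤ (∫⁻ q, d q.1.1 q.1.2 ^ p ∂η) ^ (1 / p) + (∫⁻ q, d q.1.2 q.2 ^ p ∂η) ^ (1 / p) := step3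
    _ = _ := by rw [e1, e2]

/-- Triangle inequality for the `p`-th root of the optimal transport cost. -/
lemma otCost_triangle [StandardBorelSpace Z] [Nonempty Z]
    (c : Z → Z → ℝ≥0∞) (hc : Measurable (Function.uncurry c))
    (d : Z → Z → ℝ≥0∞) {p : ℝ} (hp : 1 ≤ p)
    (hcd : ∀ a b, c a b = d a b ^ p)
    (htri : ∀ a b e, d a e ≤ d a b + d b e)
    (μ ρ ν : Measure Z) [IsProbabilityMeasure μ] [IsProbabilityMeasure ρ]
    [IsProbabilityMeasure ν] :
    otCost c μ ν ^ (1 / p) ≤ otCost c μ ρ ^ (1 / p) + otCost c ρ ν ^ (1 / p) := by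
  have hp0 : (0 : ℝ) < p := lt_of_lt_of_le one_pos hp
  have h1p : (0 : ℝ) < 1 / p := by positivity
  set a := otCost c μ ρ with ha
  set b := otCost c ρ ν with hb
  rcases eq_or_ne a ∞ with haT | haT
  · rw [haT, ENNReal.top_rpow_of_pos h1p]
    simp
  rcases eq_or_ne b ∞ with hbT | hbT
  · rw [hbT, ENNReal.top_rpow_of_pos h1p]
    simp
  have htend : Tendsto (fun ε : ℝ≥0∞ => (a + ε) ^ (1 / p) + (b + ε) ^ (1 / p))
      (𝓝[>] 0) (𝓝 (a ^ (1 / p) + b ^ (1 / p))) := by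
    have h0 : Tendsto (fun ε : ℝ≥0∞ => ε) (𝓝[>] 0) (𝓝 0) :=
      tendsto_id.mono_left nhdsWithin_le_nhds
    have hA : Tendsto (fun ε : ℝ≥0∞ => a + ε) (𝓝[>] 0) (𝓝 a) := by
      simpa using (tendsto_const_nhds (x := a)).add h0
    have hB : Tendsto (fun ε : ℝ≥0∞ => b + ε) (𝓝[>] 0) (𝓝 b) := by
      simpa using (tendsto_const_nhds (x := b)).add h0
    exact ((ENNReal.continuous_rpow_const.tendsto a).comp hA).add
      ((ENNReal.continuous_rpow_const.tendsto b).comp hB)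
  refine ge_of_tendsto htend ?_
  filter_upwards [self_mem_nhdsWithin] with ε hε
  have hε0 : ε ≠ 0 := ne_of_gt hε
  have hlt1 : a < a + ε := ENNReal.lt_add_right haT hε0
  have hlt2 : b < b + ε := ENNReal.lt_add_right hbT hε0
  obtain ⟨π₁, hπ₁⟩ := iInf_lt_iff.mp (lt_of_le_of_lt (le_of_eq ha) hlt1)
  obtain ⟨hc₁, hπ₁c⟩ := iInf_lt_iff.mp hπ₁
  obtain ⟨π₂, hπ₂⟩ := iInf_lt_iff.mp (lt_of_le_of_lt (le_of_eq hb) hlt2)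
  obtain ⟨hc₂, hπ₂c⟩ := iInf_lt_iff.mp hπ₂
  haveI : IsProbabilityMeasure π₁ := isProb_of_map_fst hc₁.1
  haveI : IsProbabilityMeasure π₂ := isProb_of_map_fst hc₂.1
  refine (otCost_glue c hc d hp hcd htri μ ρ ν π₁ π₂ hc₁.1 hc₁.2 hc₂.1 hc₂.2).trans ?_
  exact add_le_add (ENNReal.rpow_le_rpow hπ₁c.le h1p.le) (ENNReal.rpow_le_rpow hπ₂c.le h1p.le)

end Aux

section AuxGroup

open ProbabilityTheory Function

variable {Z : Type*} [MeasurableSpace Z] [AddCommGroup Z] [TopologicalSpace Z]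
  [IsTopologicalAddGroup Z] [PolishSpace Z] [BorelSpace Z]

lemma isProbabilityMeasure_mconv (μ κ : Measure Z) [IsProbabilityMeasure μ]
    [IsProbabilityMeasure κ] : IsProbabilityMeasure (mconv μ κ) :=
  Measure.isProbabilityMeasure_map measurable_add.aemeasurable

/-- Convolving both measures by the same measure does not increase the transport cost,
for a translation invariant cost. -/
lemma otCost_mconv_le (h : Z → ℝ≥0∞) (c : Z → Z → ℝ≥0∞)
    (hc : Measurable (Function.uncurry c))
    (hch : ∀ z₁ z₂, c z₁ z₂ = h (z₁ - z₂))
    (μ ν κ : Measure Z) [IsProbabilityMeasure μ] [IsProbabilityMeasure κ] :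
    otCost c (mconv μ κ) (mconv ν κ) ≤ otCost c μ ν := by
  have hcZ : Measurable fun q : Z × Z => c q.1 q.2 := hc
  refine le_iInf₂ fun π hπ => ?_
  haveI : IsProbabilityMeasure π := isProb_of_map_fst hπ.1
  set T : (Z × Z) × Z → Z × Z := fun q => (q.1.1 + q.2, q.1.2 + q.2) with hT
  have hTm : Measurable T :=
    (measurable_fst.fst.add measurable_snd).prodMk (measurable_fst.snd.add measurable_snd)
  have hmargin : ∀ pr : Z × Z → Z, Measurable pr →
      ((fun q : Z × Z => q.1 + q.2) ∘ Prod.map pr (id : Z → Z)) = (pr ∘ T) →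
      ((π.prod κ).map T).map pr = mconv (π.map pr) κ := by
    intro pr hpr hfun
    have hmid : ((π.prod κ).map (Prod.map pr id)) = (π.map pr).prod κ := by
      rw [← Measure.map_prod_map _ _ hpr measurable_id, Measure.map_id]
    rw [mconv, ← hmid, Measure.map_map hpr hTm,
      Measure.map_map measurable_add (hpr.prodMap measurable_id), hfun]
  have hfst : ((π.prod κ).map T).map Prod.fst = mconv μ κ := by
    rw [hmargin Prod.fst measurable_fst rfl, hπ.1]
  have hsnd : ((π.prod κ).map T).map Prod.snd = mconv ν κ := by
    rw [hmargin Prod.snd measurable_snd rfl, hπ.2]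
  refine (otCost_le_coupling _ hfst hsnd).trans_eq ?_
  rw [lintegral_map hcZ hTm]
  have he : ∀ q : (Z × Z) × Z, c (T q).1 (T q).2 = c q.1.1 q.1.2 := fun q => by
    simp only [hT]
    rw [hch, hch, add_sub_add_right_eq_sub]
  calc ∫⁻ q, c (T q).1 (T q).2 ∂π.prod κ
      = ∫⁻ q, c q.1.1 q.1.2 ∂π.prod κ := lintegral_congr he
    _ = ∫⁻ q, c q.1 q.2 ∂((π.prod κ).map Prod.fst) :=
        (lintegral_map hcZ measurable_fst).symm
    _ = ∫⁻ q, c q.1 q.2 ∂π := by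
        rw [Measure.map_fst_prod, measure_univ, one_smul]

/-- The cost between a measure and its convolution is bounded by `∫ h dκ`. -/
lemma otCost_mconv_self_le (h : Z → ℝ≥0∞) (c : Z → Z → ℝ≥0∞)
    (hc : Measurable (Function.uncurry c))
    (hch : ∀ z₁ z₂, c z₁ z₂ = h (z₁ - z₂))
    (hsymm : ∀ z₁ z₂, c z₁ z₂ = c z₂ z₁)
    (ρ κ : Measure Z) [IsProbabilityMeasure ρ] [IsProbabilityMeasure κ] :
    otCost c ρ (mconv ρ κ) ≤ ∫⁻ z, h z ∂κ := by
  have hcZ : Measurable fun q : Z × Z => c q.1 q.2 := hc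
  have hh : Measurable h := by
    have he : h = fun z => c z 0 := by
      funext z
      rw [hch, sub_zero]
    rw [he]
    exact hc.comp (measurable_id.prodMk measurable_const)
  set T : Z × Z → Z × Z := fun q => (q.1, q.1 + q.2) with hT
  have hTm : Measurable T := measurable_fst.prodMk (measurable_fst.add measurable_snd)
  have h1 : ((ρ.prod κ).map T).map Prod.fst = ρ := by
    rw [Measure.map_map measurable_fst hTm]
    have he : (Prod.fst ∘ T) = (Prod.fst : Z × Z → Z) := rfl
    rw [he, Measure.map_fst_prod, measure_univ, one_smul]
  have h2 : ((ρ.prod κ).map T).map Prod.snd = mconv ρ κ := by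
    have he : (Prod.snd ∘ T) = fun q : Z × Z => q.1 + q.2 := rfl
    rw [Measure.map_map measurable_snd hTm, he, mconv]
  refine (otCost_le_coupling _ h1 h2).trans_eq ?_
  rw [lintegral_map hcZ hTm]
  have he : ∀ q : Z × Z, c (T q).1 (T q).2 = h q.2 := fun q => by
    simp only [hT]
    rw [hch]
    have h3 : q.1 - (q.1 + q.2) = -q.2 := by abel
    rw [h3, ← zero_sub, ← hch, hsymm, hch, sub_zero]
  calc ∫⁻ q, c (T q).1 (T q).2 ∂ρ.prod κ
      = ∫⁻ q, h q.2 ∂ρ.prod κ := lintegral_congr he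
    _ = ∫⁻ z, h z ∂((ρ.prod κ).map Prod.snd) := (lintegral_map hh measurable_snd).symm
    _ = ∫⁻ z, h z ∂κ := by rw [Measure.map_snd_prod, measure_univ, one_smul]

end AuxGroup

section ProdMarginals

open ProbabilityTheory Function

variable {X Y : Type*}
  [AddCommGroup X] [TopologicalSpace X] [IsTopologicalAddGroup X]
  [PolishSpace X] [MeasurableSpace X] [BorelSpace X]
  [AddCommGroup Y] [TopologicalSpace Y] [IsTopologicalAddGroup Y]
  [PolishSpace Y] [MeasurableSpace Y] [BorelSpace Y]

lemma map_fst_mconv (γ : Measure (X × Y)) [IsProbabilityMeasure γ]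
    (κX : Measure X) (κY : Measure Y) [IsProbabilityMeasure κX] [IsProbabilityMeasure κY] :
    (mconv γ (κX.prod κY)).map Prod.fst = mconv (γ.map Prod.fst) κX := by
  have hmid : ((γ.prod (κX.prod κY)).map
        (Prod.map (Prod.fst : X × Y → X) (Prod.fst : X × Y → X)))
      = (γ.map Prod.fst).prod κX := by
    rw [← Measure.map_prod_map _ _ measurable_fst measurable_fst]
    congr 1
    simp
  have hfun : ((fun q : X × X => q.1 + q.2) ∘ Prod.map (Prod.fst : X × Y → X) Prod.fst)
      = ((Prod.fst : X × Y → X) ∘ fun q : (X × Y) × (X × Y) => q.1 + q.2) := rfl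
  rw [mconv, mconv, ← hmid, Measure.map_map measurable_fst measurable_add,
    Measure.map_map measurable_add (measurable_fst.prodMap measurable_fst), hfun]

lemma map_snd_mconv (γ : Measure (X × Y)) [IsProbabilityMeasure γ]
    (κX : Measure X) (κY : Measure Y) [IsProbabilityMeasure κX] [IsProbabilityMeasure κY] :
    (mconv γ (κX.prod κY)).map Prod.snd = mconv (γ.map Prod.snd) κY := by
  have hmid : ((γ.prod (κX.prod κY)).map
        (Prod.map (Prod.snd : X × Y → Y) (Prod.snd : X × Y → Y)))
      = (γ.map Prod.snd).prod κY := by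
    rw [← Measure.map_prod_map _ _ measurable_snd measurable_snd]
    congr 1
    simp
  have hfun : ((fun q : Y × Y => q.1 + q.2) ∘ Prod.map (Prod.snd : X × Y → Y) Prod.snd)
      = ((Prod.snd : X × Y → Y) ∘ fun q : (X × Y) × (X × Y) => q.1 + q.2) := rfl
  rw [mconv, mconv, ← hmid, Measure.map_map measurable_snd measurable_add,
    Measure.map_map measurable_add (measurable_snd.prodMap measurable_snd), hfun]

lemma mconv_prod_prod (μ : Measure X) (ν : Measure Y) (κX : Measure X) (κY : Measure Y)
    [IsProbabilityMeasure μ] [IsProbabilityMeasure ν] [IsProbabilityMeasure κX]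
    [IsProbabilityMeasure κY] :
    mconv (μ.prod ν) (κX.prod κY) = (mconv μ κX).prod (mconv ν κY) := by
  haveI := isProbabilityMeasure_mconv μ κX
  haveI := isProbabilityMeasure_mconv ν κY
  refine (Measure.prod_eq fun s t hs ht => ?_).symm
  have hst : MeasurableSet ((fun q : (X × Y) × (X × Y) => q.1 + q.2) ⁻¹' (s ×ˢ t)) :=
    measurable_add (hs.prod ht)
  rw [mconv, Measure.map_apply measurable_add (hs.prod ht), Measure.prod_apply hst]
  have hsec : ∀ z : X × Y,
      (Prod.mk z ⁻¹' ((fun q : (X × Y) × (X × Y) => q.1 + q.2) ⁻¹' (s ×ˢ t)))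
      = ((fun u => z.1 + u) ⁻¹' s) ×ˢ ((fun v => z.2 + v) ⁻¹' t) := fun z => rfl
  simp_rw [hsec, Measure.prod_prod]
  have hXf : Measurable fun x : X => κX ((fun u => x + u) ⁻¹' s) :=
    measurable_measure_prodMk_left (measurable_add hs)
  have hYf : Measurable fun y : Y => κY ((fun v => y + v) ⁻¹' t) :=
    measurable_measure_prodMk_left (measurable_add ht)
  rw [lintegral_prod_mul hXf.aemeasurable hYf.aemeasurable]
  have hXe : mconv μ κX s = ∫⁻ x, κX ((fun u => x + u) ⁻¹' s) ∂μ := by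
    rw [mconv, Measure.map_apply measurable_add hs, Measure.prod_apply (measurable_add hs)]
    rfl
  have hYe : mconv ν κY t = ∫⁻ y, κY ((fun v => y + v) ⁻¹' t) ∂ν := by
    rw [mconv, Measure.map_apply measurable_add ht, Measure.prod_apply (measurable_add ht)]
    rfl
  rw [hXe, hYe]

end ProdMarginals

/-- For a translation invariant cost
`c(x₁,y₁,x₂,y₂) = h(x₁ − x₂, y₁ − y₂)` on the product of two Polish topological vector
spaces and a product kernel `κ = κ_X ⊗ κ_Y`, convolving `γ` with `κ` does not increase
the transport dependency: `τ(γ * κ) ≤ τ(γ)`. If moreover `c = d^p` for a pseudo-metric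
`d` on `X × Y` and `p ≥ 1`, and `τ(γ) < ∞`, then
`τ(γ)^{1/p} − τ(γ * κ)^{1/p} ≤ 2 (∫ h dκ)^{1/p}`. -/
theorem tdep_conv_le
    {X Y : Type*}
    [AddCommGroup X] [Module ℝ X] [TopologicalSpace X] [IsTopologicalAddGroup X]
    [ContinuousSMul ℝ X] [PolishSpace X] [MeasurableSpace X] [BorelSpace X]
    [AddCommGroup Y] [Module ℝ Y] [TopologicalSpace Y] [IsTopologicalAddGroup Y]
    [ContinuousSMul ℝ Y] [PolishSpace Y] [MeasurableSpace Y] [BorelSpace Y]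
    (h : X × Y → ℝ≥0∞)
    (c : X × Y → X × Y → ℝ≥0∞) (hch : ∀ z₁ z₂ : X × Y, c z₁ z₂ = h (z₁ - z₂))
    (hc_lsc : LowerSemicontinuous (Function.uncurry c))
    (hc_symm : ∀ z₁ z₂, c z₁ z₂ = c z₂ z₁)
    (hc_diag : ∀ z, c z z = 0)
    (γ : Measure (X × Y)) [IsProbabilityMeasure γ]
    (κX : Measure X) (κY : Measure Y)
    [IsProbabilityMeasure κX] [IsProbabilityMeasure κY] :
    tdep c (mconv γ (κX.prod κY)) ≤ tdep c γ ∧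
      ∀ (d : X × Y → X × Y → ℝ≥0∞) (p : ℝ), 1 ≤ p →
        (∀ z₁ z₂, d z₁ z₂ = d z₂ z₁) → (∀ z, d z z = 0) →
        (∀ z₁ z₂ z₃, d z₁ z₃ ≤ d z₁ z₂ + d z₂ z₃) →
        (∀ z₁ z₂, c z₁ z₂ = d z₁ z₂ ^ p) →
        tdep c γ ≠ ∞ →
        tdep c γ ^ (1 / p) - tdep c (mconv γ (κX.prod κY)) ^ (1 / p)
          ≤ 2 * (∫⁻ z, h z ∂(κX.prod κY)) ^ (1 / p) := by
  have hc : Measurable (Function.uncurry c) := hc_lsc.measurable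
  haveI : Nonempty (X × Y) := ⟨0⟩
  set κ := κX.prod κY with hκ
  haveI : IsProbabilityMeasure (γ.map (Prod.fst : X × Y → X)) :=
    Measure.isProbabilityMeasure_map measurable_fst.aemeasurable
  haveI : IsProbabilityMeasure (γ.map (Prod.snd : X × Y → Y)) :=
    Measure.isProbabilityMeasure_map measurable_snd.aemeasurable
  set m := (γ.map (Prod.fst : X × Y → X)).prod (γ.map (Prod.snd : X × Y → Y)) with hm
  haveI : IsProbabilityMeasure (mconv γ κ) := isProbabilityMeasure_mconv γ κ
  haveI : IsProbabilityMeasure m := by rw [hm]; infer_instance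
  haveI : IsProbabilityMeasure (mconv m κ) := isProbabilityMeasure_mconv m κ
  have hmarg : ((mconv γ κ).map Prod.fst).prod ((mconv γ κ).map Prod.snd) = mconv m κ := by
    rw [map_fst_mconv γ κX κY, map_snd_mconv γ κX κY, hm, mconv_prod_prod]
  have part1 : tdep c (mconv γ κ) ≤ tdep c γ := by
    rw [tdep, tdep, hmarg, ← hm]
    exact otCost_mconv_le h c hc hch γ m κ
  refine ⟨part1, fun d p hp hd_symm hd_diag hd_tri hcd hfin => ?_⟩
  have hp0 : (0 : ℝ) < p := lt_of_lt_of_le one_pos hp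
  have h1p : (0 : ℝ) < 1 / p := by positivity
  set H := ∫⁻ z, h z ∂κ with hH
  have t1 := otCost_triangle c hc d hp hcd hd_tri γ (mconv γ κ) m
  have t2 := otCost_triangle c hc d hp hcd hd_tri (mconv γ κ) (mconv m κ) m
  have e1 : otCost c γ (mconv γ κ) ≤ H := otCost_mconv_self_le h c hc hch hc_symm γ κ
  have e2 : otCost c (mconv m κ) m ≤ H := by
    rw [otCost_symm c hc hc_symm]
    exact otCost_mconv_self_le h c hc hch hc_symm m κ
  rw [tdep, tdep, hmarg, ← hm]
  refine tsub_le_iff_right.mpr ?_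
  calc otCost c γ m ^ (1 / p)
      ≤ otCost c γ (mconv γ κ) ^ (1 / p) + otCost c (mconv γ κ) m ^ (1 / p) := t1
    _ ≤ otCost c γ (mconv γ κ) ^ (1 / p) +
        (otCost c (mconv γ κ) (mconv m κ) ^ (1 / p) + otCost c (mconv m κ) m ^ (1 / p)) :=
        add_le_add_right t2 _
    _ ≤ H ^ (1 / p) + (otCost c (mconv γ κ) (mconv m κ) ^ (1 / p) + H ^ (1 / p)) :=
        add_le_add (ENNReal.rpow_le_rpow e1 h1p.le)
          (add_le_add_right (ENNReal.rpow_le_rpow e2 h1p.le) _)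
    _ = 2 * H ^ (1 / p) + otCost c (mconv γ κ) (mconv m κ) ^ (1 / p) := by ring
end

section
/- Let X and Y be Polish spaces and c_Y a positive continuous cost function on Y. For any probability measure γ on X × Y with marginals μ on X and ν on Y such that diam_{c_Y} ν < ∞, the equality τ^Y_{c_Y}(γ) = diam_{c_Y} ν holds if and only if γ = (id, φ)_*μ for a measurable function φ : X → Y (i.e., γ is the law of (ξ, φ(ξ)) with ξ ∼ μ). -/
open MeasureTheory ENNReal Filter Topology ProbabilityTheory

lemma otCost_le {Z : Type*} [MeasurableSpace Z] (c : Z → Z → ℝ≥0∞)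
    (π : Measure (Z × Z)) {μ ν : Measure Z}
    (h1 : π.map Prod.fst = μ) (h2 : π.map Prod.snd = ν) :
    otCost c μ ν ≤ ∫⁻ p, c p.1 p.2 ∂π :=
  iInf_le_of_le π (iInf_le_of_le ⟨h1, h2⟩ le_rfl)

lemma otCost_le_prod {Z : Type*} [MeasurableSpace Z] (c : Z → Z → ℝ≥0∞)
    (hc : Measurable (Function.uncurry c))
    (ρ ν : Measure Z) [IsProbabilityMeasure ρ] [IsProbabilityMeasure ν] :
    otCost c ρ ν ≤ ∫⁻ y₁, ∫⁻ y₂, c y₁ y₂ ∂ν ∂ρ := by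
  have h := otCost_le c (ρ.prod ν) (μ := ρ) (ν := ν) (by simp) (by simp)
  have hc' : Measurable fun p : Z × Z => c p.1 p.2 := hc
  exact h.trans_eq (MeasureTheory.lintegral_prod _ hc'.aemeasurable)

lemma otCost_dirac {Z : Type*} [MeasurableSpace Z] [MeasurableSingletonClass Z]
    (c : Z → Z → ℝ≥0∞) (hc : Measurable (Function.uncurry c))
    (y : Z) (ν : Measure Z) [IsProbabilityMeasure ν] :
    otCost c (Measure.dirac y) ν = ∫⁻ z, c y z ∂ν := by
  refine le_antisymm ?_ ?_
  · have h := otCost_le c ((Measure.dirac y).prod ν) (μ := Measure.dirac y) (ν := ν)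
      (by simp) (by simp)
    have hc' : Measurable fun p : Z × Z => c p.1 p.2 := hc
    refine h.trans_eq ?_
    rw [Measure.dirac_prod]
    exact lintegral_map hc' measurable_prodMk_left
  · refine le_iInf₂ fun π hπ => ?_
    obtain ⟨h1, h2⟩ := hπ
    have hae : ∀ᵐ p ∂π, p.1 = y := by
      have : π.map Prod.fst {y}ᶜ = 0 := by rw [h1]; simp
      rw [Measure.map_apply measurable_fst (MeasurableSet.singleton y).compl] at this
      filter_upwards [measure_eq_zero_iff_ae_notMem.mp this] with p hp
      simpa using hp
    have : ∫⁻ p, c p.1 p.2 ∂π = ∫⁻ p, c y p.2 ∂π := by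
      refine lintegral_congr_ae ?_
      filter_upwards [hae] with p hp; rw [hp]
    have hcy : Measurable fun z : Z => c y z :=
      hc.comp (measurable_const.prodMk measurable_id)
    rw [this, ← h2]
    exact (lintegral_map hcy measurable_snd).le

lemma compProd_det {X Y : Type*} [MeasurableSpace X] [MeasurableSpace Y]
    [MeasurableSingletonClass Y]
    (μ : Measure X) [SFinite μ] {φ : X → Y} (hφ : Measurable φ) :
    μ ⊗ₘ Kernel.deterministic φ hφ = μ.map (fun x => (x, φ x)) := by
  ext s hs
  rw [Measure.compProd_apply hs, Measure.map_apply (measurable_id'.prodMk hφ) hs]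
  have : ∀ x, Kernel.deterministic φ hφ x (Prod.mk x ⁻¹' s)
      = ((fun x => (x, φ x)) ⁻¹' s).indicator (fun _ => (1 : ℝ≥0∞)) x := by
    intro x
    rw [Kernel.deterministic_apply,
      Measure.dirac_apply' _ (measurable_prodMk_left hs)]
    by_cases h : (x, φ x) ∈ s <;> simp [Set.indicator, h]
  simp_rw [this]
  rw [lintegral_indicator ((measurable_id'.prodMk hφ) hs), setLIntegral_one]

lemma eq_dirac_of_offdiag {Y : Type*} [TopologicalSpace Y] [PolishSpace Y]
    [MeasurableSpace Y] [BorelSpace Y]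
    (ρ : Measure Y) [IsProbabilityMeasure ρ]
    (h : (ρ.prod ρ) {p : Y × Y | p.1 ≠ p.2} = 0) : ∃ y, ρ = Measure.dirac y := by
  have hD : MeasurableSet {p : Y × Y | p.1 ≠ p.2} :=
    (isClosed_diagonal (X := Y)).measurableSet.compl
  rw [Measure.prod_apply hD] at h
  have hmeas : Measurable fun a => ρ (Prod.mk a ⁻¹' {p : Y × Y | p.1 ≠ p.2}) :=
    measurable_measure_prodMk_left hD
  have hae : ∀ᵐ a ∂ρ, ρ (Prod.mk a ⁻¹' {p : Y × Y | p.1 ≠ p.2}) = 0 :=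
    (lintegral_eq_zero_iff hmeas).mp h
  have hne : (ae ρ).NeBot := ae_neBot.mpr (IsProbabilityMeasure.ne_zero ρ)
  obtain ⟨a, ha⟩ := hae.exists
  have ha' : ρ {a}ᶜ = 0 := by
    have : Prod.mk a ⁻¹' {p : Y × Y | p.1 ≠ p.2} = {a}ᶜ := by
      ext b; simp [eq_comm]
    rwa [this] at ha
  refine ⟨a, ?_⟩
  ext s hs
  rw [Measure.dirac_apply' _ hs]
  by_cases has : a ∈ s
  · have h1 : ρ sᶜ = 0 := measure_mono_null (fun b hb => by
      simp only [Set.mem_compl_iff, Set.mem_singleton_iff]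
      rintro rfl; exact hb has) ha'
    have := measure_add_measure_compl hs (μ := ρ)
    rw [h1, add_zero] at this
    simp [this, has, Set.indicator]
  · have : ρ s = 0 := measure_mono_null (fun b hb => by
      simp only [Set.mem_compl_iff, Set.mem_singleton_iff]
      rintro rfl; exact has hb) ha'
    simp [this, has, Set.indicator]

lemma exists_phi {X Y : Type*} [MeasurableSpace X]
    [TopologicalSpace Y] [PolishSpace Y] [MeasurableSpace Y] [BorelSpace Y] [Nonempty Y]
    (cY : Y → Y → ℝ≥0∞) (hc : Measurable (Function.uncurry cY))
    (hcY_pos : ∀ y₁ y₂, y₁ ≠ y₂ → 0 < cY y₁ y₂)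
    (μ : Measure X) (κ : Kernel X Y) [IsMarkovKernel κ]
    (hae : ∀ᵐ x ∂μ, ∫⁻ y₁, ∫⁻ y₂, cY y₁ y₂ ∂(κ x) ∂(κ x) = 0) :
    ∃ φ : X → Y, Measurable φ ∧ ∀ᵐ x ∂μ, κ x = Measure.dirac (φ x) := by
  have hc' : Measurable fun p : Y × Y => cY p.1 p.2 := hc
  obtain ⟨i, hi⟩ := MeasureTheory.exists_measurableEmbedding_real Y
  set e : Y → ℝ≥0∞ := fun y => ENNReal.ofReal (Real.exp (i y)) with he
  have he_meas : Measurable e :=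
    ENNReal.measurable_ofReal.comp (Real.measurable_exp.comp hi.measurable)
  have he_inj : Function.Injective e := by
    intro a b hab
    rw [he] at hab
    simp only [ENNReal.ofReal_eq_ofReal_iff (Real.exp_pos _).le (Real.exp_pos _).le] at hab
    exact hi.injective (Real.exp_injective hab)
  have he_emb : MeasurableEmbedding e := he_meas.measurableEmbedding he_inj
  obtain ⟨e', he'_meas, he'_id⟩ := he_emb.exists_measurable_extend measurable_id
    (fun _ => ‹Nonempty Y›)
  set r : X → ℝ≥0∞ := fun x => ∫⁻ y, e y ∂(κ x) with hr
  have hr_meas : Measurable r :=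
    Measurable.lintegral_kernel_prod_right' (he_meas.comp measurable_snd)
  refine ⟨e' ∘ r, he'_meas.comp hr_meas, ?_⟩
  filter_upwards [hae] with x hx
  -- κ x is a Dirac measure
  have hprod : ∫⁻ p, cY p.1 p.2 ∂((κ x).prod (κ x)) = 0 := by
    rw [MeasureTheory.lintegral_prod _ hc'.aemeasurable]; exact hx
  have hzero : ∀ᵐ p ∂((κ x).prod (κ x)), cY p.1 p.2 = 0 :=
    (lintegral_eq_zero_iff hc').mp hprod
  have hoff : ((κ x).prod (κ x)) {p : Y × Y | p.1 ≠ p.2} = 0 := by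
    rw [ae_iff] at hzero
    refine measure_mono_null ?_ hzero
    intro p hp
    exact (hcY_pos p.1 p.2 hp).ne'
  obtain ⟨y, hy⟩ := eq_dirac_of_offdiag (κ x) hoff
  have : r x = e y := by rw [hr]; simp only [hy]; exact lintegral_dirac' y he_meas
  rw [hy]
  simp only [Function.comp_apply, this]
  congr 1
  exact (congrFun he'_id y).symm

lemma enn_div_mul (t a b : ℝ≥0∞) (hb0 : b ≠ 0) (hbt : b ≠ ∞) : t / (a * b) * b = t / a := by
  calc t / (a * b) * b = t * ((a * b)⁻¹ * b) := by rw [div_eq_mul_inv, mul_assoc]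
    _ = t * (a⁻¹ * (b⁻¹ * b)) := by
        rw [ENNReal.mul_inv (Or.inr hbt) (Or.inr hb0), mul_assoc]
    _ = t / a := by rw [ENNReal.inv_mul_cancel hb0 hbt, mul_one, div_eq_mul_inv]

lemma enn_coeff (t a b : ℝ≥0∞) (ha0 : a ≠ 0) (hat : a ≠ ∞) (hb0 : b ≠ 0) (hbt : b ≠ ∞)
    (ht : t ≤ a * b) : (1 - t / (a * b)) * b + t / a = b := by
  rw [ENNReal.sub_mul (fun _ _ => hbt), one_mul, enn_div_mul t a b hb0 hbt]
  refine tsub_add_cancel_of_le ?_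
  rw [ENNReal.div_le_iff_le_mul (Or.inl ha0) (Or.inl hat)]
  rwa [mul_comm] at ht

lemma key {X Y : Type*} [MeasurableSpace X]
    [TopologicalSpace Y] [PolishSpace Y] [MeasurableSpace Y] [BorelSpace Y]
    (cY : Y → Y → ℝ≥0∞) (hcY_cont : Continuous (Function.uncurry cY))
    (hcY_symm : ∀ y₁ y₂, cY y₁ y₂ = cY y₂ y₁)
    (hcY_diag : ∀ y, cY y y = 0)
    (μ : Measure X) [IsProbabilityMeasure μ]
    (κ : Kernel X Y) [IsMarkovKernel κ]
    (ν : Measure Y) [IsProbabilityMeasure ν]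
    (hν : ∀ ⦃B : Set Y⦄, MeasurableSet B → ν B = ∫⁻ x, κ x B ∂μ)
    (hfin : ∫⁻ x, ∫⁻ y₁, ∫⁻ y₂, cY y₁ y₂ ∂ν ∂(κ x) ∂μ ≠ ∞)
    (heq : ∫⁻ x, otCost cY (κ x) ν ∂μ = ∫⁻ x, ∫⁻ y₁, ∫⁻ y₂, cY y₁ y₂ ∂ν ∂(κ x) ∂μ) :
    ∀ᵐ x ∂μ, ∫⁻ y₁, ∫⁻ y₂, cY y₁ y₂ ∂(κ x) ∂(κ x) = 0 := by
  by_contra hcon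
  have hc' : Measurable (Function.uncurry cY) := hcY_cont.measurable
  have hcm : Measurable fun p : Y × Y => cY p.1 p.2 := hc'
  set g : X → ℝ≥0∞ := fun x => ∫⁻ y₁, ∫⁻ y₂, cY y₁ y₂ ∂(κ x) ∂(κ x) with hg
  have hBne : μ {x | ¬ g x = 0} ≠ 0 := by rwa [ae_iff] at hcon
  obtain ⟨b, hbc, -, hb⟩ := TopologicalSpace.exists_countable_basis Y
  set S : Set (Set Y × Set Y × ℕ) := {p | p.1 ∈ b ∧ p.2.1 ∈ b ∧
    (∀ y ∈ p.1, ∀ z ∈ p.2.1, ((p.2.2 : ℝ≥0∞))⁻¹ < cY y z) ∧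
    (∀ y ∈ p.1, ∀ z ∈ p.1, cY y z < (((4 * p.2.2 : ℕ) : ℝ≥0∞))⁻¹) ∧
    (∀ y ∈ p.2.1, ∀ z ∈ p.2.1, cY y z < (((4 * p.2.2 : ℕ) : ℝ≥0∞))⁻¹)} with hS
  have hScount : S.Countable :=
    (hbc.prod (hbc.prod Set.countable_univ)).mono
      (fun p hp => Set.mem_prod.mpr ⟨hp.1, Set.mem_prod.mpr ⟨hp.2.1, Set.mem_univ _⟩⟩)
  have claimA : ∀ y₁ y₂ : Y, cY y₁ y₂ ≠ 0 → ∃ p ∈ S, y₁ ∈ p.1 ∧ y₂ ∈ p.2.1 := by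
    intro y₁ y₂ hcpos
    obtain ⟨n, hn⟩ := ENNReal.exists_inv_nat_lt hcpos
    have hm'pos : (0 : ℝ≥0∞) < (((4 * n : ℕ) : ℝ≥0∞))⁻¹ :=
      ENNReal.inv_pos.mpr (ENNReal.natCast_ne_top _)
    have hS1 : IsOpen {q : Y × Y | ((n : ℝ≥0∞))⁻¹ < Function.uncurry cY q} :=
      isOpen_lt continuous_const hcY_cont
    have hS2 : IsOpen {q : Y × Y | Function.uncurry cY q < (((4 * n : ℕ) : ℝ≥0∞))⁻¹} :=
      isOpen_lt hcY_cont continuous_const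
    obtain ⟨u1, v1, hu1, hv1, hy1u1, hy2v1, h1sub⟩ := isOpen_prod_iff.mp hS1 y₁ y₂ hn
    obtain ⟨u2, v2, hu2, hv2, h21, h22, h2sub⟩ := isOpen_prod_iff.mp hS2 y₁ y₁
      (by simpa [Function.uncurry, hcY_diag] using hm'pos)
    obtain ⟨u3, v3, hu3, hv3, h31, h32, h3sub⟩ := isOpen_prod_iff.mp hS2 y₂ y₂
      (by simpa [Function.uncurry, hcY_diag] using hm'pos)
    obtain ⟨U, hUb, hyU, hUsub⟩ := hb.exists_subset_of_mem_open
      (show y₁ ∈ u1 ∩ (u2 ∩ v2) from ⟨hy1u1, h21, h22⟩) (hu1.inter (hu2.inter hv2))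
    obtain ⟨V, hVb, hyV, hVsub⟩ := hb.exists_subset_of_mem_open
      (show y₂ ∈ v1 ∩ (u3 ∩ v3) from ⟨hy2v1, h31, h32⟩) (hv1.inter (hu3.inter hv3))
    refine ⟨(U, V, n), ⟨hUb, hVb, ?_, ?_, ?_⟩, hyU, hyV⟩
    · intro y hy z hz
      exact h1sub (Set.mk_mem_prod (hUsub hy).1 (hVsub hz).1)
    · intro y hy z hz
      exact h2sub (Set.mk_mem_prod (hUsub hy).2.1 (hUsub hz).2.2)
    · intro y hy z hz
      exact h3sub (Set.mk_mem_prod (hVsub hy).2.1 (hVsub hz).2.2)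
  have cover : {x | ¬ g x = 0} ⊆ ⋃ p ∈ S, {x | κ x p.1 ≠ 0 ∧ κ x p.2.1 ≠ 0} := by
    intro x hx
    have hprod : ∫⁻ q, cY q.1 q.2 ∂((κ x).prod (κ x)) ≠ 0 := by
      rw [MeasureTheory.lintegral_prod _ hcm.aemeasurable]; exact hx
    have hE : ((κ x).prod (κ x)) {q : Y × Y | cY q.1 q.2 ≠ 0} ≠ 0 := by
      intro h0
      refine hprod ((lintegral_eq_zero_iff hcm).mpr ?_)
      have : ∀ᵐ q ∂((κ x).prod (κ x)), cY q.1 q.2 = 0 := by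
        rw [ae_iff]; simpa using h0
      exact this
    have hsub : {q : Y × Y | cY q.1 q.2 ≠ 0} ⊆ ⋃ p ∈ S, p.1 ×ˢ p.2.1 := by
      intro q hq
      obtain ⟨p, hpS, h1, h2⟩ := claimA q.1 q.2 hq
      exact Set.mem_biUnion hpS ⟨h1, h2⟩
    obtain ⟨p, hpS, hp⟩ : ∃ p ∈ S, ((κ x).prod (κ x)) (p.1 ×ˢ p.2.1) ≠ 0 := by
      by_contra hall
      push_neg at hall
      exact (fun h => hE (measure_mono_null hsub h))
        ((measure_biUnion_null_iff hScount).mpr hall)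
    rw [Measure.prod_prod] at hp
    exact Set.mem_biUnion hpS
      ⟨fun h => hp (by rw [h, zero_mul]), fun h => hp (by rw [h, mul_zero])⟩
  obtain ⟨p₀, hp₀S, hp₀⟩ : ∃ p ∈ S, μ {x | κ x p.1 ≠ 0 ∧ κ x p.2.1 ≠ 0} ≠ 0 := by
    by_contra hall
    push_neg at hall
    exact (fun h => hBne (measure_mono_null cover h))
      ((measure_biUnion_null_iff hScount).mpr hall)
  obtain ⟨U, V, n⟩ := p₀
  obtain ⟨hUb, hVb, hUV, hUU, hVV⟩ := hp₀S
  -- basic constants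
  set m : ℝ≥0∞ := ((n : ℝ≥0∞))⁻¹ with hm
  set m' : ℝ≥0∞ := (((4 * n : ℕ) : ℝ≥0∞))⁻¹ with hm'
  have hm'0 : m' ≠ 0 := ENNReal.inv_ne_zero.mpr (ENNReal.natCast_ne_top _)
  have h4m' : 4 * m' = m := by
    rw [hm', hm]
    push_cast
    rw [ENNReal.mul_inv (Or.inl (by norm_num)) (Or.inl (by norm_num)), ← mul_assoc,
      ENNReal.mul_inv_cancel (by norm_num) (by norm_num), one_mul]
  have h3m : 3 * m' ≤ m := by
    rw [← h4m']
    exact mul_le_mul_left (by norm_num) m'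
  have hUmeas : MeasurableSet U := (hb.isOpen hUb).measurableSet
  have hVmeas : MeasurableSet V := (hb.isOpen hVb).measurableSet
  have hdisjUV : Disjoint U V := by
    rw [Set.disjoint_left]
    intro a haU haV
    have h := hUV a haU a haV
    rw [hcY_diag a] at h
    exact not_lt_of_ge zero_le h
  set P : ℝ≥0∞ := ν U with hP
  set Q : ℝ≥0∞ := ν V with hQ
  have hP0 : P ≠ 0 := by
    intro h0
    rw [hP, hν hUmeas] at h0
    have h1 := (lintegral_eq_zero_iff (κ.measurable_coe hUmeas)).mp h0
    exact hp₀ (measure_mono_null (fun x hx => hx.1) (ae_iff.mp h1))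
  have hQ0 : Q ≠ 0 := by
    intro h0
    rw [hQ, hν hVmeas] at h0
    have h1 := (lintegral_eq_zero_iff (κ.measurable_coe hVmeas)).mp h0
    exact hp₀ (measure_mono_null (fun x hx => hx.2) (ae_iff.mp h1))
  have hPt : P ≠ ∞ := measure_ne_top ν U
  have hQt : Q ≠ ∞ := measure_ne_top ν V
  set cp : X → ℝ≥0∞ := fun x => ∫⁻ y₁, ∫⁻ y₂, cY y₁ y₂ ∂ν ∂(κ x) with hcp
  have hinnerν : Measurable fun y₁ => ∫⁻ y₂, cY y₁ y₂ ∂ν :=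
    Measurable.lintegral_prod_right hc'
  have hcpmeas : Measurable cp :=
    Measurable.lintegral_kernel_prod_right' (hinnerν.comp measurable_snd)
  have hfae : ∀ᵐ x ∂μ, cp x < ∞ := ae_lt_top hcpmeas hfin
  set A : Set X := {x | κ x U ≠ 0 ∧ κ x V ≠ 0} ∩ {x | cp x < ∞} with hA
  have hAmeas : MeasurableSet A := by
    refine MeasurableSet.inter ?_ ?_
    · rw [Set.setOf_and]
      exact ((κ.measurable_coe hUmeas) (measurableSet_singleton 0).compl).inter
        ((κ.measurable_coe hVmeas) (measurableSet_singleton 0).compl)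
    · exact measurableSet_lt hcpmeas measurable_const
  have hμA : μ A ≠ 0 := by
    intro h0
    refine hp₀ ?_
    have h1 : μ ({x | κ x U ≠ 0 ∧ κ x V ≠ 0} \ {x | cp x < ∞}) = 0 :=
      measure_mono_null (fun x hx => hx.2) (ae_iff.mp hfae)
    have h2 := measure_le_inter_add_diff μ {x | κ x U ≠ 0 ∧ κ x V ≠ 0} {x | cp x < ∞}
    rw [← hA, h0, h1, add_zero] at h2
    exact le_antisymm h2 zero_le
  -- auxiliary functions
  set pf : X → ℝ≥0∞ := fun x => κ x U with hpf
  set qf : X → ℝ≥0∞ := fun x => κ x V with hqf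
  set tt : X → ℝ≥0∞ := fun x => min (pf x * Q) (qf x * P) with htt
  set W : Set (Y × Y) := U ×ˢ V ∪ V ×ˢ U with hW
  have hWmeas : MeasurableSet W := (hUmeas.prod hVmeas).union (hVmeas.prod hUmeas)
  set CUV : X → ℝ≥0∞ := fun x => ∫⁻ y₁ in U, ∫⁻ y₂ in V, cY y₁ y₂ ∂ν ∂(κ x) with hCUV
  set CVU : X → ℝ≥0∞ := fun x => ∫⁻ y₁ in V, ∫⁻ y₂ in U, cY y₁ y₂ ∂ν ∂(κ x) with hCVU
  set CUU : X → ℝ≥0∞ := fun x => ∫⁻ y₁ in U, ∫⁻ y₂ in U, cY y₁ y₂ ∂ν ∂(κ x) with hCUU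
  set CVV : X → ℝ≥0∞ := fun x => ∫⁻ y₁ in V, ∫⁻ y₂ in V, cY y₁ y₂ ∂ν ∂(κ x) with hCVV
  set R : X → ℝ≥0∞ := fun x =>
    ∫⁻ y₁, ∫⁻ y₂, (Wᶜ.indicator (fun q : Y × Y => cY q.1 q.2)) (y₁, y₂) ∂ν ∂(κ x) with hR
  set F : X → ℝ≥0∞ := fun x =>
    R x + (1 - tt x / (pf x * Q)) * CUV x + (1 - tt x / (qf x * P)) * CVU x
      + (tt x / (pf x * P)) * CUU x + (tt x / (qf x * Q)) * CVV x with hF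
  -- the pointwise estimate
  have hpt : ∀ x ∈ A, otCost cY (κ x) ν ≤ F x ∧ F x + m' * tt x ≤ cp x := by
    rintro x ⟨⟨hp0, hq0⟩, hcpfin⟩
    set ρ : Measure Y := κ x with hρ
    have hpt' : pf x ≠ ∞ := measure_ne_top _ _
    have hqt' : qf x ≠ ∞ := measure_ne_top _ _
    have hpQ0 : pf x * Q ≠ 0 := mul_ne_zero hp0 hQ0
    have hpQt : pf x * Q ≠ ∞ := ENNReal.mul_ne_top hpt' hQt
    have hqP0 : qf x * P ≠ 0 := mul_ne_zero hq0 hP0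
    have hqPt : qf x * P ≠ ∞ := ENNReal.mul_ne_top hqt' hPt
    have hpP0 : pf x * P ≠ 0 := mul_ne_zero hp0 hP0
    have hpPt : pf x * P ≠ ∞ := ENNReal.mul_ne_top hpt' hPt
    have hqQ0 : qf x * Q ≠ 0 := mul_ne_zero hq0 hQ0
    have hqQt : qf x * Q ≠ ∞ := ENNReal.mul_ne_top hqt' hQt
    have ht1 : tt x ≤ pf x * Q := min_le_left _ _
    have ht2 : tt x ≤ qf x * P := min_le_right _ _
    set MUV : Measure (Y × Y) := (ρ.restrict U).prod (ν.restrict V) with hMUV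
    set MVU : Measure (Y × Y) := (ρ.restrict V).prod (ν.restrict U) with hMVU
    set MUU : Measure (Y × Y) := (ρ.restrict U).prod (ν.restrict U) with hMUU
    set MVV : Measure (Y × Y) := (ρ.restrict V).prod (ν.restrict V) with hMVV
    set rest : Measure (Y × Y) := (ρ.prod ν).restrict Wᶜ with hrest
    have hWd : Disjoint (U ×ˢ V) (V ×ˢ U) := by
      rw [Set.disjoint_left]
      rintro ⟨a, c⟩ ⟨haU, hcV⟩ ⟨haV, hcU⟩
      exact (Set.disjoint_left.mp hdisjUV haU) haV
    have hsplit : ρ.prod ν = rest + (MUV + MVU) := by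
      have h1 : MUV + MVU = (ρ.prod ν).restrict W := by
        rw [hMUV, hMVU, Measure.prod_restrict, Measure.prod_restrict,
          ← Measure.restrict_union hWd (hVmeas.prod hUmeas)]
      rw [h1, hrest, add_comm]
      exact (Measure.restrict_add_restrict_compl hWmeas).symm
    set a₁ : ℝ≥0∞ := 1 - tt x / (pf x * Q) with ha₁
    set a₂ : ℝ≥0∞ := 1 - tt x / (qf x * P) with ha₂
    set a₃ : ℝ≥0∞ := tt x / (pf x * P) with ha₃
    set a₄ : ℝ≥0∞ := tt x / (qf x * Q) with ha₄
    set π : Measure (Y × Y) := rest + (a₁ • MUV + a₂ • MVU + a₃ • MUU + a₄ • MVV) with hπ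
    have hfstMUV : MUV.map Prod.fst = Q • ρ.restrict U := by
      rw [hMUV, Measure.map_fst_prod, Measure.restrict_apply_univ]
    have hfstMVU : MVU.map Prod.fst = P • ρ.restrict V := by
      rw [hMVU, Measure.map_fst_prod, Measure.restrict_apply_univ]
    have hfstMUU : MUU.map Prod.fst = P • ρ.restrict U := by
      rw [hMUU, Measure.map_fst_prod, Measure.restrict_apply_univ]
    have hfstMVV : MVV.map Prod.fst = Q • ρ.restrict V := by
      rw [hMVV, Measure.map_fst_prod, Measure.restrict_apply_univ]
    have hsndMUV : MUV.map Prod.snd = pf x • ν.restrict V := by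
      rw [hMUV, Measure.map_snd_prod, Measure.restrict_apply_univ]
    have hsndMVU : MVU.map Prod.snd = qf x • ν.restrict U := by
      rw [hMVU, Measure.map_snd_prod, Measure.restrict_apply_univ]
    have hsndMUU : MUU.map Prod.snd = pf x • ν.restrict U := by
      rw [hMUU, Measure.map_snd_prod, Measure.restrict_apply_univ]
    have hsndMVV : MVV.map Prod.snd = qf x • ν.restrict V := by
      rw [hMVV, Measure.map_snd_prod, Measure.restrict_apply_univ]
    have hfstprod : (ρ.prod ν).map Prod.fst = ρ := by
      rw [Measure.map_fst_prod, measure_univ, one_smul]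
    have hsndprod : (ρ.prod ν).map Prod.snd = ν := by
      rw [Measure.map_snd_prod, measure_univ, one_smul]
    have hfstbase : rest.map Prod.fst + (Q • ρ.restrict U + P • ρ.restrict V) = ρ := by
      have hh := congrArg (fun mm : Measure (Y × Y) => mm.map Prod.fst) hsplit
      rw [Measure.map_add _ _ measurable_fst, Measure.map_add _ _ measurable_fst,
        hfstMUV, hfstMVU, hfstprod] at hh
      exact hh.symm
    have hsndbase : rest.map Prod.snd + (pf x • ν.restrict V + qf x • ν.restrict U) = ν := by
      have hh := congrArg (fun mm : Measure (Y × Y) => mm.map Prod.snd) hsplit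
      rw [Measure.map_add _ _ measurable_snd, Measure.map_add _ _ measurable_snd,
        hsndMUV, hsndMVU, hsndprod] at hh
      exact hh.symm
    have e₁ : a₁ * Q + a₃ * P = Q := by
      rw [ha₁, ha₃, enn_div_mul _ _ _ hP0 hPt]
      exact enn_coeff (tt x) (pf x) Q hp0 hpt' hQ0 hQt ht1
    have e₂ : a₂ * P + a₄ * Q = P := by
      rw [ha₂, ha₄, enn_div_mul _ _ _ hQ0 hQt]
      exact enn_coeff (tt x) (qf x) P hq0 hqt' hP0 hPt ht2
    have e₃ : a₁ * pf x + a₄ * qf x = pf x := by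
      rw [ha₁, ha₄, mul_comm (qf x) Q, enn_div_mul _ _ _ hq0 hqt', mul_comm (pf x) Q]
      exact enn_coeff (tt x) Q (pf x) hQ0 hQt hp0 hpt' (by rwa [mul_comm] at ht1)
    have e₄ : a₂ * qf x + a₃ * pf x = qf x := by
      rw [ha₂, ha₃, mul_comm (pf x) P, enn_div_mul _ _ _ hp0 hpt', mul_comm (qf x) P]
      exact enn_coeff (tt x) P (qf x) hP0 hPt hq0 hqt' (by rwa [mul_comm] at ht2)
    have hπfst : π.map Prod.fst = ρ := by
      rw [hπ, Measure.map_add _ _ measurable_fst, Measure.map_add _ _ measurable_fst,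
        Measure.map_add _ _ measurable_fst, Measure.map_add _ _ measurable_fst,
        Measure.map_smul, Measure.map_smul, Measure.map_smul, Measure.map_smul,
        hfstMUV, hfstMVU, hfstMUU, hfstMVV, smul_smul, smul_smul, smul_smul, smul_smul]
      have hsum : (a₁ * Q) • ρ.restrict U + (a₂ * P) • ρ.restrict V + (a₃ * P) • ρ.restrict U
            + (a₄ * Q) • ρ.restrict V = Q • ρ.restrict U + P • ρ.restrict V := by
        calc (a₁ * Q) • ρ.restrict U + (a₂ * P) • ρ.restrict V + (a₃ * P) • ρ.restrict U
              + (a₄ * Q) • ρ.restrict V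
            = (a₁ * Q + a₃ * P) • ρ.restrict U + (a₂ * P + a₄ * Q) • ρ.restrict V := by
              rw [add_smul, add_smul]; abel
          _ = Q • ρ.restrict U + P • ρ.restrict V := by rw [e₁, e₂]
      rw [hsum]
      exact hfstbase
    have hπsnd : π.map Prod.snd = ν := by
      rw [hπ, Measure.map_add _ _ measurable_snd, Measure.map_add _ _ measurable_snd,
        Measure.map_add _ _ measurable_snd, Measure.map_add _ _ measurable_snd,
        Measure.map_smul, Measure.map_smul, Measure.map_smul, Measure.map_smul,
        hsndMUV, hsndMVU, hsndMUU, hsndMVV, smul_smul, smul_smul, smul_smul, smul_smul]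
      have hsum : (a₁ * pf x) • ν.restrict V + (a₂ * qf x) • ν.restrict U
            + (a₃ * pf x) • ν.restrict U + (a₄ * qf x) • ν.restrict V
            = pf x • ν.restrict V + qf x • ν.restrict U := by
        calc (a₁ * pf x) • ν.restrict V + (a₂ * qf x) • ν.restrict U
              + (a₃ * pf x) • ν.restrict U + (a₄ * qf x) • ν.restrict V
            = (a₁ * pf x + a₄ * qf x) • ν.restrict V
              + (a₂ * qf x + a₃ * pf x) • ν.restrict U := by
              rw [add_smul, add_smul]; abel
          _ = pf x • ν.restrict V + qf x • ν.restrict U := by rw [e₃, e₄]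
      rw [hsum]
      exact hsndbase
    -- costs
    have hcostMUV : ∫⁻ q, cY q.1 q.2 ∂MUV = CUV x := by
      rw [hMUV, MeasureTheory.lintegral_prod _ hcm.aemeasurable]
    have hcostMVU : ∫⁻ q, cY q.1 q.2 ∂MVU = CVU x := by
      rw [hMVU, MeasureTheory.lintegral_prod _ hcm.aemeasurable]
    have hcostMUU : ∫⁻ q, cY q.1 q.2 ∂MUU = CUU x := by
      rw [hMUU, MeasureTheory.lintegral_prod _ hcm.aemeasurable]
    have hcostMVV : ∫⁻ q, cY q.1 q.2 ∂MVV = CVV x := by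
      rw [hMVV, MeasureTheory.lintegral_prod _ hcm.aemeasurable]
    have hcostrest : ∫⁻ q, cY q.1 q.2 ∂rest = R x := by
      rw [hrest, ← lintegral_indicator hWmeas.compl,
        MeasureTheory.lintegral_prod _ ((hcm.indicator hWmeas.compl)).aemeasurable]
    have hcostπ : ∫⁻ q, cY q.1 q.2 ∂π = F x := by
      rw [hπ, lintegral_add_measure, lintegral_add_measure, lintegral_add_measure,
        lintegral_add_measure, lintegral_smul_measure, lintegral_smul_measure,
        lintegral_smul_measure, lintegral_smul_measure,
        hcostrest, hcostMUV, hcostMVU, hcostMUU, hcostMVV, hF]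
      ring
    have hcpeq : cp x = R x + CUV x + CVU x := by
      have h0 : cp x = ∫⁻ q, cY q.1 q.2 ∂(ρ.prod ν) :=
        (MeasureTheory.lintegral_prod _ hcm.aemeasurable).symm
      rw [h0, hsplit, lintegral_add_measure, lintegral_add_measure,
        hcostrest, hcostMUV, hcostMVU, add_assoc]
    -- bounds
    have hCUVlb : m * (pf x * Q) ≤ CUV x := by
      have hin : ∀ y₁ ∈ U, m * Q ≤ ∫⁻ y₂ in V, cY y₁ y₂ ∂ν := by
        intro y₁ hy₁
        calc m * Q = m * ν V := by rw [hQ]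
          _ = ∫⁻ _ in V, m ∂ν := (setLIntegral_const V m).symm
          _ ≤ ∫⁻ y₂ in V, cY y₁ y₂ ∂ν :=
              setLIntegral_mono' hVmeas fun y₂ hy₂ => (hUV y₁ hy₁ y₂ hy₂).le
      calc m * (pf x * Q) = (m * Q) * ρ U := by simp only [hpf, hρ]; ring
        _ = ∫⁻ _ in U, m * Q ∂ρ := (setLIntegral_const U (m * Q)).symm
        _ ≤ CUV x := setLIntegral_mono' hUmeas hin
    have hCVUlb : m * (qf x * P) ≤ CVU x := by
      have hin : ∀ y₁ ∈ V, m * P ≤ ∫⁻ y₂ in U, cY y₁ y₂ ∂ν := by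
        intro y₁ hy₁
        calc m * P = m * ν U := by rw [hP]
          _ = ∫⁻ _ in U, m ∂ν := (setLIntegral_const U m).symm
          _ ≤ ∫⁻ y₂ in U, cY y₁ y₂ ∂ν :=
              setLIntegral_mono' hUmeas fun y₂ hy₂ => by
                rw [hcY_symm]; exact (hUV y₂ hy₂ y₁ hy₁).le
      calc m * (qf x * P) = (m * P) * ρ V := by simp only [hqf, hρ]; ring
        _ = ∫⁻ _ in V, m * P ∂ρ := (setLIntegral_const V (m * P)).symm
        _ ≤ CVU x := setLIntegral_mono' hVmeas hin
    have hCUUub : CUU x ≤ m' * (pf x * P) := by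
      have hin : ∀ y₁ ∈ U, ∫⁻ y₂ in U, cY y₁ y₂ ∂ν ≤ m' * P := by
        intro y₁ hy₁
        calc ∫⁻ y₂ in U, cY y₁ y₂ ∂ν ≤ ∫⁻ _ in U, m' ∂ν :=
              setLIntegral_mono' hUmeas fun y₂ hy₂ => (hUU y₁ hy₁ y₂ hy₂).le
          _ = m' * P := by rw [setLIntegral_const, hP]
      calc CUU x ≤ ∫⁻ _ in U, m' * P ∂ρ := setLIntegral_mono' hUmeas hin
        _ = m' * (pf x * P) := by
            rw [setLIntegral_const]; simp only [hpf, hρ]; ring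
    have hCVVub : CVV x ≤ m' * (qf x * Q) := by
      have hin : ∀ y₁ ∈ V, ∫⁻ y₂ in V, cY y₁ y₂ ∂ν ≤ m' * Q := by
        intro y₁ hy₁
        calc ∫⁻ y₂ in V, cY y₁ y₂ ∂ν ≤ ∫⁻ _ in V, m' ∂ν :=
              setLIntegral_mono' hVmeas fun y₂ hy₂ => (hVV y₁ hy₁ y₂ hy₂).le
          _ = m' * Q := by rw [setLIntegral_const, hQ]
      calc CVV x ≤ ∫⁻ _ in V, m' * Q ∂ρ := setLIntegral_mono' hVmeas hin
        _ = m' * (qf x * Q) := by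
            rw [setLIntegral_const]; simp only [hqf, hρ]; ring
    have hCUVt : CUV x ≠ ∞ := by
      refine ne_top_of_le_ne_top hcpfin.ne ?_
      rw [hcpeq]
      exact le_add_right le_add_self
    have hCVUt : CVU x ≠ ∞ := by
      refine ne_top_of_le_ne_top hcpfin.ne ?_
      rw [hcpeq]
      exact le_add_self
    have hθ₁ : m * tt x ≤ tt x / (pf x * Q) * CUV x := by
      calc m * tt x = tt x / (pf x * Q) * (m * (pf x * Q)) := by
            rw [show tt x / (pf x * Q) * (m * (pf x * Q))
                = m * (tt x / (pf x * Q) * (pf x * Q)) from by ring,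
              ENNReal.div_mul_cancel hpQ0 hpQt]
        _ ≤ tt x / (pf x * Q) * CUV x := mul_le_mul_right hCUVlb _
    have hθ₂ : m * tt x ≤ tt x / (qf x * P) * CVU x := by
      calc m * tt x = tt x / (qf x * P) * (m * (qf x * P)) := by
            rw [show tt x / (qf x * P) * (m * (qf x * P))
                = m * (tt x / (qf x * P) * (qf x * P)) from by ring,
              ENNReal.div_mul_cancel hqP0 hqPt]
        _ ≤ tt x / (qf x * P) * CVU x := mul_le_mul_right hCVUlb _
    have hθ₂le1 : tt x / (qf x * P) ≤ 1 :=
      (ENNReal.div_le_iff_le_mul (Or.inl hqP0) (Or.inl hqPt)).mpr (by rwa [one_mul])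
    have hmtCVU : m * tt x ≤ CVU x :=
      hθ₂.trans (by
        calc tt x / (qf x * P) * CVU x ≤ 1 * CVU x := mul_le_mul_left hθ₂le1 _
          _ = CVU x := one_mul _)
    have h₁ : a₁ * CUV x ≤ CUV x - m * tt x := by
      rw [ha₁, ENNReal.sub_mul (fun _ _ => hCUVt), one_mul]
      exact tsub_le_tsub_left hθ₁ (CUV x)
    have h₂ : a₂ * CVU x ≤ CVU x - m * tt x := by
      rw [ha₂, ENNReal.sub_mul (fun _ _ => hCVUt), one_mul]
      exact tsub_le_tsub_left hθ₂ (CVU x)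
    have h₃ : a₃ * CUU x ≤ m' * tt x := by
      calc a₃ * CUU x ≤ a₃ * (m' * (pf x * P)) := mul_le_mul_right hCUUub _
        _ = m' * (tt x / (pf x * P) * (pf x * P)) := by rw [ha₃]; ring
        _ = m' * tt x := by rw [ENNReal.div_mul_cancel hpP0 hpPt]
    have h₄ : a₄ * CVV x ≤ m' * tt x := by
      calc a₄ * CVV x ≤ a₄ * (m' * (qf x * Q)) := mul_le_mul_right hCVVub _
        _ = m' * (tt x / (qf x * Q) * (qf x * Q)) := by rw [ha₄]; ring
        _ = m' * tt x := by rw [ENNReal.div_mul_cancel hqQ0 hqQt]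
    constructor
    · exact (otCost_le cY π hπfst hπsnd).trans_eq hcostπ
    · have h5 : m' * tt x + m' * tt x + m' * tt x ≤ m * tt x := by
        rw [show m' * tt x + m' * tt x + m' * tt x = 3 * m' * tt x from by ring, mul_assoc]
        rw [← mul_assoc]
        exact mul_le_mul_left h3m _
      calc F x + m' * tt x
            ≤ R x + (CUV x - m * tt x) + (CVU x - m * tt x) + m' * tt x + m' * tt x
                + m' * tt x := by
              simp only [hF]
              exact add_le_add (add_le_add (add_le_add (add_le_add (add_le_add le_rfl h₁)
                h₂) h₃) h₄) le_rfl
        _ = R x + (CUV x - m * tt x) + (CVU x - m * tt x)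
                + (m' * tt x + m' * tt x + m' * tt x) := by
              rw [add_assoc, add_assoc]
              congr 1
              rw [← add_assoc]
        _ ≤ R x + (CUV x - m * tt x) + (CVU x - m * tt x) + m * tt x := add_le_add_right h5 _
        _ = R x + (CUV x - m * tt x) + CVU x := by
              rw [add_assoc _ (CVU x - m * tt x), tsub_add_cancel_of_le hmtCVU]
        _ ≤ R x + CUV x + CVU x := by gcongr; exact tsub_le_self
        _ = cp x := hcpeq.symm
  -- measurability of F
  have hpfmeas : Measurable pf := κ.measurable_coe hUmeas
  have hqfmeas : Measurable qf := κ.measurable_coe hVmeas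
  have httmeas : Measurable tt := (hpfmeas.mul measurable_const).min (hqfmeas.mul measurable_const)
  have hsetin : ∀ (s : Set Y), MeasurableSet s → ∀ (u : Set Y), MeasurableSet u →
      Measurable (fun x => ∫⁻ y₁ in s, ∫⁻ y₂ in u, cY y₁ y₂ ∂ν ∂(κ x)) := by
    intro s hs u hu
    have hin : Measurable fun y₁ => ∫⁻ y₂ in u, cY y₁ y₂ ∂ν :=
      Measurable.lintegral_prod_right hc'
    have hun : Measurable (Function.uncurry fun (_ : X) (y₁ : Y) =>
        ∫⁻ y₂ in u, cY y₁ y₂ ∂ν) := hin.comp measurable_snd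
    exact Measurable.setLIntegral_kernel_prod_right (κ := κ) hun hs
  have hRmeas : Measurable R := by
    have hin : Measurable fun y₁ =>
        ∫⁻ y₂, (Wᶜ.indicator (fun q : Y × Y => cY q.1 q.2)) (y₁, y₂) ∂ν :=
      Measurable.lintegral_prod_right' (hcm.indicator hWmeas.compl)
    exact Measurable.lintegral_kernel_prod_right' (hin.comp measurable_snd)
  have hFmeas : Measurable F := by
    refine ((((hRmeas.add ?_).add ?_).add ?_).add ?_)
    · exact (measurable_const.sub ((httmeas.div (hpfmeas.mul measurable_const)))).mul
        (hsetin U hUmeas V hVmeas)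
    · exact (measurable_const.sub ((httmeas.div (hqfmeas.mul measurable_const)))).mul
        (hsetin V hVmeas U hUmeas)
    · exact (httmeas.div (hpfmeas.mul measurable_const)).mul (hsetin U hUmeas U hUmeas)
    · exact (httmeas.div (hqfmeas.mul measurable_const)).mul (hsetin V hVmeas V hVmeas)
  set Ft : X → ℝ≥0∞ := fun x => if x ∈ A then F x else cp x with hFt
  have hFtmeas : Measurable Ft := Measurable.ite hAmeas hFmeas hcpmeas
  have hotle : ∀ x, otCost cY (κ x) ν ≤ Ft x := by
    intro x
    by_cases hx : x ∈ A
    · simp only [hFt, hx, if_true]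
      exact (hpt x hx).1
    · simp only [hFt, hx, if_false]
      exact otCost_le_prod cY hc' (κ x) ν
  have hptw : ∀ x, Ft x + A.indicator (fun x => m' * tt x) x ≤ cp x := by
    intro x
    by_cases hx : x ∈ A
    · rw [Set.indicator_of_mem hx]
      simp only [hFt, hx, if_true]
      exact (hpt x hx).2
    · rw [Set.indicator_of_notMem hx]
      simp only [hFt, hx, if_false, add_zero]
      exact le_rfl
  have hint1 : ∫⁻ x, Ft x ∂μ + ∫⁻ x, A.indicator (fun x => m' * tt x) x ∂μ
      ≤ ∫⁻ x, cp x ∂μ := by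
    rw [← lintegral_add_left hFtmeas]
    exact lintegral_mono hptw
  have hint2 : ∫⁻ x, cp x ∂μ ≤ ∫⁻ x, Ft x ∂μ := by
    rw [← heq]
    exact lintegral_mono hotle
  have hind0 : ∫⁻ x, A.indicator (fun x => m' * tt x) x ∂μ = 0 := by
    by_contra hne
    have h1 : ∫⁻ x, cp x ∂μ + ∫⁻ x, A.indicator (fun x => m' * tt x) x ∂μ
        ≤ ∫⁻ x, cp x ∂μ := le_trans (add_le_add_left hint2 _) hint1
    have h3 : ∫⁻ x, cp x ∂μ + ∫⁻ x, A.indicator (fun x => m' * tt x) x ∂μ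
        ≤ ∫⁻ x, cp x ∂μ + 0 := by rwa [add_zero]
    have h4 := (ENNReal.add_le_add_iff_left hfin).mp h3
    exact hne (le_antisymm h4 zero_le)
  rw [lintegral_indicator hAmeas] at hind0
  have hae2 := (setLIntegral_eq_zero_iff hAmeas (httmeas.const_mul m')).mp hind0
  refine hμA (measure_mono_null (fun x hx => ?_) (ae_iff.mp hae2))
  simp only [Set.mem_setOf_eq]
  intro h
  have htt0 : tt x ≠ 0 :=
    ne_of_gt (lt_min (ENNReal.mul_pos hx.1.1 hQ0) (ENNReal.mul_pos hx.1.2 hP0))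
  exact (mul_ne_zero hm'0 htt0) (h hx)


/-- The `c`-diameter of a measure `μ`: `diam_c μ = ∫∫ c dμ dμ`. -/
noncomputable def diamC {Z : Type*} [MeasurableSpace Z]
    (c : Z → Z → ℝ≥0∞) (μ : Measure Z) : ℝ≥0∞ :=
  ∫⁻ z₁, ∫⁻ z₂, c z₁ z₂ ∂μ ∂μ

noncomputable def marginalTdep {X Y : Type*} [MeasurableSpace X] [MeasurableSpace Y]
    (cY : Y → Y → ℝ≥0∞) (γ : Measure (X × Y)) (κ : Kernel X Y) : ℝ≥0∞ :=
  ∫⁻ x, otCost cY (κ x) (γ.map Prod.snd) ∂(γ.map Prod.fst)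

/-- For a positive continuous cost `c_Y` on `Y` and a probability
measure `γ` on `X × Y` whose second marginal has finite `c_Y`-diameter, the marginal
transport dependency attains its maximal value `diam_{c_Y} ν` if and only if
`γ = (id, φ)_*μ` for a measurable function `φ : X → Y`. -/
theorem marginalTdep_eq_diam_iff_deterministic
    {X Y : Type*} [TopologicalSpace X] [PolishSpace X] [MeasurableSpace X] [BorelSpace X]
    [TopologicalSpace Y] [PolishSpace Y] [MeasurableSpace Y] [BorelSpace Y]
    (cY : Y → Y → ℝ≥0∞)
    (hcY_cont : Continuous (Function.uncurry cY))
    (hcY_symm : ∀ y₁ y₂, cY y₁ y₂ = cY y₂ y₁)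
    (hcY_diag : ∀ y, cY y y = 0)
    (hcY_pos : ∀ y₁ y₂, y₁ ≠ y₂ → 0 < cY y₁ y₂)
    (γ : Measure (X × Y)) [IsProbabilityMeasure γ]
    (κ : Kernel X Y) [IsMarkovKernel κ]
    (hκ : (γ.map Prod.fst) ⊗ₘ κ = γ)
    (hdiam : diamC cY (γ.map Prod.snd) ≠ ∞) :
    marginalTdep cY γ κ = diamC cY (γ.map Prod.snd) ↔
      ∃ φ : X → Y, Measurable φ ∧ γ = (γ.map Prod.fst).map fun x => (x, φ x) := by
  have hY : Nonempty Y := by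
    rcases isEmpty_or_nonempty Y with h | h
    · exfalso
      have h1 : γ Set.univ = 1 := measure_univ
      rw [Set.univ_eq_empty_iff.mpr inferInstance] at h1
      simp at h1
    · exact h
  set μ := γ.map Prod.fst with hμdef
  set ν := γ.map Prod.snd with hνdef
  haveI hμp : IsProbabilityMeasure μ := Measure.isProbabilityMeasure_map measurable_fst.aemeasurable
  haveI hνp : IsProbabilityMeasure ν := Measure.isProbabilityMeasure_map measurable_snd.aemeasurable
  have hc' : Measurable (Function.uncurry cY) := hcY_cont.measurable
  have hinner : Measurable fun y₁ => ∫⁻ y₂, cY y₁ y₂ ∂ν :=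
    Measurable.lintegral_prod_right hc'
  have hνB : ∀ ⦃B : Set Y⦄, MeasurableSet B → ν B = ∫⁻ x, κ x B ∂μ := by
    intro B hB
    rw [hνdef, Measure.map_apply measurable_snd hB, ← hκ,
      Measure.compProd_apply (measurable_snd hB)]
    rfl
  have hbind : μ.bind (fun x => κ x) = ν := by
    ext B hB
    rw [Measure.bind_apply hB (Kernel.measurable κ).aemeasurable]
    exact (hνB hB).symm
  have hcost : ∫⁻ x, ∫⁻ y₁, ∫⁻ y₂, cY y₁ y₂ ∂ν ∂(κ x) ∂μ = diamC cY ν := by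
    set h : Y → ℝ≥0∞ := fun y₁ => ∫⁻ y₂, cY y₁ y₂ ∂ν with hh
    show ∫⁻ x, ∫⁻ y₁, h y₁ ∂(κ x) ∂μ = ∫⁻ z₁, h z₁ ∂ν
    conv_rhs => rw [← hbind]
    exact (Measure.lintegral_bind (Kernel.measurable κ).aemeasurable hinner.aemeasurable).symm
  constructor
  · intro hτ
    have heq : ∫⁻ x, otCost cY (κ x) ν ∂μ
        = ∫⁻ x, ∫⁻ y₁, ∫⁻ y₂, cY y₁ y₂ ∂ν ∂(κ x) ∂μ := by
      rw [hcost]; exact hτ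
    have hae := key cY hcY_cont hcY_symm hcY_diag μ κ ν hνB (by rw [hcost]; exact hdiam) heq
    obtain ⟨φ, hφ, hφd⟩ := exists_phi cY hc' hcY_pos μ κ hae
    refine ⟨φ, hφ, ?_⟩
    have hdet : μ ⊗ₘ κ = μ ⊗ₘ Kernel.deterministic φ hφ := by
      refine Measure.compProd_congr ?_
      filter_upwards [hφd] with x h
      rw [h, Kernel.deterministic_apply]
    rw [← hκ, hdet, compProd_det]
  · rintro ⟨φ, hφ, hγ⟩
    have hmapφ : μ.map φ = ν := by
      rw [hνdef]
      conv_lhs => rw [show φ = Prod.snd ∘ (fun x => (x, φ x)) from rfl]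
      rw [← Measure.map_map measurable_snd (measurable_id'.prodMk hφ), ← hγ]
    have hc₁ := eq_condKernel_of_measure_eq_compProd κ (show γ = γ.fst ⊗ₘ κ from hκ.symm)
    have hdet : γ = γ.fst ⊗ₘ Kernel.deterministic φ hφ := by
      rw [show γ.fst ⊗ₘ Kernel.deterministic φ hφ = μ.map (fun x => (x, φ x)) from
        compProd_det μ hφ]
      exact hγ
    have hc₂ := eq_condKernel_of_measure_eq_compProd (Kernel.deterministic φ hφ) hdet
    have hκd : ∀ᵐ x ∂μ, κ x = Measure.dirac (φ x) := by
      have : ∀ᵐ x ∂γ.fst, κ x = Measure.dirac (φ x) := by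
        filter_upwards [hc₁, hc₂] with x h1 h2
        rw [h1, ← h2, Kernel.deterministic_apply]
      exact this
    show ∫⁻ x, otCost cY (κ x) ν ∂μ = diamC cY ν
    calc ∫⁻ x, otCost cY (κ x) ν ∂μ
        = ∫⁻ x, ∫⁻ z, cY (φ x) z ∂ν ∂μ := by
          refine lintegral_congr_ae ?_
          filter_upwards [hκd] with x h
          rw [h, otCost_dirac cY hc' _ ν]
      _ = ∫⁻ y, ∫⁻ z, cY y z ∂ν ∂(μ.map φ) := (lintegral_map hinner hφ).symm
      _ = diamC cY ν := by rw [hmapφ]; rfl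
end
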